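/- Let k, l, s, n be integers with 1 ≤ k ≤ s, 1 ≤ l ≤ s, s ≤ n and s ≥ 2l. Then ∑_{j=0}^{k−1} (−1)^{k+j+1} · C(n+2k−s−1, k−j−1) · C(n−s+j, n−s) · C(n+j, 2l−1) = (−1)^{k+1} · ∑_{i=0}^{min(k−1, 2l−1)} C(n−s+i, i) · C(s−1−i, 2l−1−i) · C(2k−i−2, k−1) + ∑_{i=2k−1}^{2l−1} C(n−s+i, i) · C(s−1−i, 2l−1−i) · C(i−k, k−1). -/

import Mathlib

open Finset

private def c (a b : ℕ) : ℤ := (Nat.choose a b : ℤ)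

private lemma c_pascal (a b : ℕ) : c (a+1) (b+1) = c a b + c a (b+1) := by
  unfold c; rw [Nat.choose_succ_succ]; push_cast; ring

private lemma c_zero (a : ℕ) : c a 0 = 1 := by simp [c]

private lemma c_eq_zero {a b : ℕ} (h : a < b) : c a b = 0 := by
  simp [c, Nat.choose_eq_zero_of_lt h]

private lemma neg_pow_sub {i a : ℕ} (h : i ≤ a) : (-1 : ℤ)^(a-i) = (-1)^a * (-1)^i := by
  have : (-1 : ℤ)^(a-i) * (-1)^i = (-1)^a := by
    rw [← pow_add]; congr 1; omega
  have h2 : ((-1 : ℤ)^i) * ((-1:ℤ)^i) = 1 := by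
    rw [← pow_add]; exact Even.neg_one_pow ⟨i, rfl⟩
  calc (-1 : ℤ)^(a-i) = (-1 : ℤ)^(a-i) * ((-1:ℤ)^i * (-1:ℤ)^i) := by rw [h2]; ring
    _ = (-1)^a * (-1)^i := by rw [← mul_assoc, this]

/-- partial alternating row sums -/
private lemma PA (p : ℕ) : ∀ h : ℕ, ∑ w ∈ range (h+1), (-1:ℤ)^w * c (p+1) w = (-1)^h * c p h := by
  intro h
  induction h with
  | zero => simp [c]
  | succ h ih =>
    rw [Finset.sum_range_succ, ih, c_pascal]
    ring

/-- hockey stick -/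
private lemma HS (q : ℕ) : ∀ u : ℕ, c (q+1+u) u = ∑ v ∈ range (u+1), c (q+v) v := by
  intro u
  induction u with
  | zero => simp [c]
  | succ u ih =>
    rw [Finset.sum_range_succ, ← ih]
    have : q+1+(u+1) = (q+1+u)+1 := by ring
    rw [this, c_pascal]
    have : q + (u+1) = q+1+u := by ring
    rw [this, add_comm]

private lemma K3b (p : ℕ) : ∀ a : ℕ,
    ∑ u ∈ range (a+1), (-1:ℤ)^u * c (p+1) (a-u) * c (p+u) u
      = if a = 0 then 1 else 0 := by
  induction p with
  | zero =>
    intro a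
    match a with
    | 0 => simp [c]
    | 1 => simp [c, Finset.sum_range_succ]
    | (b+2) =>
      rw [if_neg (by omega)]
      rw [Finset.sum_range_succ, Finset.sum_range_succ]
      have h1 : ∑ u ∈ range (b+1), (-1:ℤ)^u * c (0+1) (b+2-u) * c (0+u) u = 0 := by
        apply Finset.sum_eq_zero
        intro u hu
        simp only [Finset.mem_range] at hu
        rw [c_eq_zero (a := 1) (by omega)]
        ring
      rw [h1]
      have e1 : b+2-(b+1) = 1 := by omega
      have e2 : b+2-(b+2) = 0 := by omega
      rw [e1, e2]
      simp [c, Nat.choose_self]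
      ring
  | succ p ih =>
    intro a
    have expand : ∀ u : ℕ, c (p+1+u) u = ∑ v ∈ range (u+1), c (p+v) v := HS p
    calc ∑ u ∈ range (a+1), (-1:ℤ)^u * c (p+1+1) (a-u) * c (p+1+u) u
        = ∑ u ∈ range (a+1), ∑ v ∈ range (u+1), (-1:ℤ)^u * c (p+2) (a-u) * c (p+v) v := by
          apply Finset.sum_congr rfl
          intro u _
          have : p+1+1 = p+2 := by ring
          rw [this, expand u, Finset.mul_sum]
      _ = ∑ v ∈ range (a+1), ∑ u ∈ Finset.Icc v a, (-1:ℤ)^u * c (p+2) (a-u) * c (p+v) v := by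
          have key := Finset.sum_Ico_Ico_comm 0 (a+1)
            (fun v u => (-1:ℤ)^u * c (p+2) (a-u) * c (p+v) v)
          -- key : ∑ v in Ico 0 (a+1), ∑ u in Ico v (a+1), g u v
          --      = ∑ u in Ico 0 (a+1), ∑ v in Ico 0 (u+1), g u v
          simp only [Finset.range_eq_Ico]
          rw [← key]
          apply Finset.sum_congr rfl
          intro v hv
          simp only [Finset.mem_Ico] at hv
          have : Finset.Ico v (a+1) = Finset.Icc v a := rfl
          rw [← this]
      _ = ∑ v ∈ range (a+1), (-1:ℤ)^v * c (p+1) (a-v) * c (p+v) v := by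
          apply Finset.sum_congr rfl
          intro v hv
          simp only [Finset.mem_range] at hv
          have hva : v ≤ a := by omega
          have step1 : ∑ u ∈ Finset.Icc v a, (-1:ℤ)^u * c (p+2) (a-u) * c (p+v) v
              = (∑ u ∈ Finset.Icc v a, (-1:ℤ)^u * c (p+2) (a-u)) * c (p+v) v := by
            rw [Finset.sum_mul]
          rw [step1]
          have step2 : ∑ u ∈ Finset.Icc v a, (-1:ℤ)^u * c (p+2) (a-u)
              = ∑ i ∈ range (a-v+1), (-1:ℤ)^(v+i) * c (p+2) (a-v-i) := by
            have : Finset.Icc v a = Finset.Ico v (a+1) := rfl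
            rw [this, Finset.sum_Ico_eq_sum_range]
            apply Finset.sum_congr (by congr 1; omega)
            intro i _
            congr 2
            omega
          rw [step2]
          have step3 : ∑ i ∈ range (a-v+1), (-1:ℤ)^(v+i) * c (p+2) (a-v-i)
              = ∑ j ∈ range (a-v+1), (-1:ℤ)^(a-j) * c (p+2) j := by
            rw [← Finset.sum_range_reflect (fun j => (-1:ℤ)^(a-j) * c (p+2) j) (a-v+1)]
            apply Finset.sum_congr rfl
            intro i hi
            simp only [Finset.mem_range] at hi
            have e2 : a-v+1-1-i = a-v-i := by omega
            have e1 : a-(a-v-i) = v+i := by omega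
            rw [e2, e1]
          rw [step3]
          have step4 : ∑ j ∈ range (a-v+1), (-1:ℤ)^(a-j) * c (p+2) j
              = (-1:ℤ)^a * ((-1:ℤ)^(a-v) * c (p+1) (a-v)) := by
            rw [← PA (p+1) (a-v)]
            rw [Finset.mul_sum]
            apply Finset.sum_congr rfl
            intro j hj
            simp only [Finset.mem_range] at hj
            rw [neg_pow_sub (by omega : j ≤ a)]
            have : p+1+1 = p+2 := by ring
            rw [this]
            ring
          rw [step4, neg_pow_sub hva]
          have sq : (-1:ℤ)^a * (-1:ℤ)^a = 1 := by
            rw [← pow_add]; exact Even.neg_one_pow ⟨a, rfl⟩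
          calc (-1:ℤ)^a * ((-1)^a * (-1)^v * c (p+1) (a-v)) * c (p+v) v
              = ((-1:ℤ)^a * (-1)^a) * ((-1)^v * c (p+1) (a-v) * c (p+v) v) := by ring
            _ = (-1)^v * c (p+1) (a-v) * c (p+v) v := by rw [sq]; ring
      _ = if a = 0 then 1 else 0 := ih a

private lemma K3 (p d : ℕ) : ∀ a : ℕ,
    ∑ u ∈ range (a+1), (-1:ℤ)^u * c (p+d+1) (a-u) * c (p+u) u = c d a := by
  induction d with
  | zero =>
    intro a
    rw [K3b p a]
    match a with
    | 0 => simp [c]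
    | (b+1) => simp [c]
  | succ d ih =>
    intro a
    match a with
    | 0 => simp [c]
    | (b+1) =>
      rw [Finset.sum_range_succ]
      have split : ∀ u ∈ range (b+1),
          (-1:ℤ)^u * c (p+(d+1)+1) (b+1-u) * c (p+u) u
            = (-1:ℤ)^u * c (p+d+1) (b+1-u) * c (p+u) u
              + (-1:ℤ)^u * c (p+d+1) (b-u) * c (p+u) u := by
        intro u hu
        simp only [Finset.mem_range] at hu
        have e1 : p+(d+1)+1 = (p+d+1)+1 := by ring
        have e2 : b+1-u = (b-u)+1 := by omega
        rw [e1, e2, c_pascal]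
        ring
      rw [Finset.sum_congr rfl split, Finset.sum_add_distrib]
      have last : (-1:ℤ)^(b+1) * c (p+(d+1)+1) (b+1-(b+1)) * c (p+(b+1)) (b+1)
          = (-1:ℤ)^(b+1) * c (p+d+1) (b+1-(b+1)) * c (p+(b+1)) (b+1) := by
        have e : b+1-(b+1) = 0 := by omega
        rw [e, c_zero, c_zero]
      rw [last]
      have h1 : (∑ u ∈ range (b+1), (-1:ℤ)^u * c (p+d+1) (b+1-u) * c (p+u) u)
          + (-1:ℤ)^(b+1) * c (p+d+1) (b+1-(b+1)) * c (p+(b+1)) (b+1)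
          = c d (b+1) := by
        rw [← Finset.sum_range_succ (fun u => (-1:ℤ)^u * c (p+d+1) (b+1-u) * c (p+u) u) (b+1)]
        exact ih (b+1)
      have h2 : ∑ u ∈ range (b+1), (-1:ℤ)^u * c (p+d+1) (b-u) * c (p+u) u = c d b := ih b
      rw [c_pascal]
      linarith [h1, h2]

private lemma W (M : ℕ) : ∀ r : ℕ, ∀ N : ℕ, r ≤ M → r ≤ N →
    ∑ t ∈ range (r+1), (-1:ℤ)^t * c r t * c (N-t) M = c (N-r) (M-r) := by
  intro r
  induction r with
  | zero => intro N _ _; simp [c]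
  | succ r ih =>
    intro N hM hN
    -- split first term using sum_range_succ' : ∑_{range (n+1)} f = ∑_{range n} f (i+1) + f 0
    rw [Finset.sum_range_succ' (fun t => (-1:ℤ)^t * c (r+1) t * c (N-t) M) (r+1)]
    have e0 : (-1:ℤ)^(0:ℕ) * c (r+1) 0 * c (N-0) M = c N M := by simp [c_zero]
    rw [e0]
    have split : ∀ t ∈ range (r+1),
        (-1:ℤ)^(t+1) * c (r+1) (t+1) * c (N-(t+1)) M
          = -((-1:ℤ)^t * c r t * c ((N-1)-t) M) - (-1:ℤ)^t * c r (t+1) * c ((N-1)-t) M := by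
      intro t ht
      simp only [Finset.mem_range] at ht
      have e1 : N-(t+1) = (N-1)-t := by omega
      rw [e1, c_pascal]
      ring
    rw [Finset.sum_congr rfl split]
    have hsplit2 : ∑ t ∈ range (r+1),
        (-((-1:ℤ)^t * c r t * c ((N-1)-t) M) - (-1:ℤ)^t * c r (t+1) * c ((N-1)-t) M)
        = -(∑ t ∈ range (r+1), (-1:ℤ)^t * c r t * c ((N-1)-t) M)
          - ∑ t ∈ range (r+1), (-1:ℤ)^t * c r (t+1) * c ((N-1)-t) M := by
      rw [Finset.sum_sub_distrib, Finset.sum_neg_distrib]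
    rw [hsplit2]
    have hA : ∑ t ∈ range (r+1), (-1:ℤ)^t * c r t * c ((N-1)-t) M = c ((N-1)-r) (M-r) :=
      ih (N-1) (by omega) (by omega)
    -- second sum : ∑_{t∈range(r+1)} (-1)^t c r (t+1) c (N-1-t) M
    -- equals  c N M - c (N-r) (M-r)  … derive from ih applied to N with shifted index
    have hB : c N M + ∑ t ∈ range (r+1), (-1:ℤ)^(t+1) * c r (t+1) * c (N-(t+1)) M
        = c (N-r) (M-r) := by
      have full := ih N (by omega) (by omega)
      rw [Finset.sum_range_succ' (fun t => (-1:ℤ)^t * c r t * c (N-t) M) r] at full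
      have e0' : (-1:ℤ)^(0:ℕ) * c r 0 * c (N-0) M = c N M := by simp [c_zero]
      rw [e0'] at full
      have ext : ∑ t ∈ range r, (-1:ℤ)^(t+1) * c r (t+1) * c (N-(t+1)) M
          = ∑ t ∈ range (r+1), (-1:ℤ)^(t+1) * c r (t+1) * c (N-(t+1)) M := by
        rw [Finset.sum_range_succ]
        have : c r (r+1) = 0 := c_eq_zero (by omega)
        rw [this]
        ring
      rw [ext] at full
      linarith [full]
    have hB' : ∑ t ∈ range (r+1), (-1:ℤ)^t * c r (t+1) * c ((N-1)-t) M
        = -(∑ t ∈ range (r+1), (-1:ℤ)^(t+1) * c r (t+1) * c (N-(t+1)) M) := by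
      rw [← Finset.sum_neg_distrib]
      apply Finset.sum_congr rfl
      intro t ht
      simp only [Finset.mem_range] at ht
      have e1 : N-(t+1) = (N-1)-t := by omega
      rw [e1]
      ring
    rw [hB', hA]
    have pascal : c (N-r) (M-r) = c ((N-1)-r) ((M-1)-r) + c ((N-1)-r) (M-r) := by
      have e1 : N-r = ((N-1)-r)+1 := by omega
      have e2 : M-r = ((M-1)-r)+1 := by omega
      rw [e1, e2, c_pascal]
    have goalr : c (N-(r+1)) (M-(r+1)) = c ((N-1)-r) ((M-1)-r) := by
      congr 1 <;> omega
    rw [goalr]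
    linarith [hB, pascal]

private lemma trinom (m j t : ℕ) (h : t ≤ j) :
    c (m+j) j * c j t = c (m+t) t * c (m+j) (j-t) := by
  unfold c
  have key := Nat.choose_mul (n := m+j) (k := m+t) (s := m) (show m ≤ m+t by omega)
  have e1 : (m+j) - m = j := by omega
  have e2 : (m+t) - m = t := by omega
  rw [e1, e2] at key
  have s1 : (m+j).choose (m+t) = (m+j).choose (j-t) := by
    rw [← Nat.choose_symm (show m+t ≤ m+j by omega)]
    congr 1
    omega
  have s2 : (m+t).choose m = (m+t).choose t := by
    rw [← Nat.choose_symm (show t ≤ m+t by omega)]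
    congr 1
    omega
  have s3 : (m+j).choose m = (m+j).choose j := by
    rw [← Nat.choose_symm (show j ≤ m+j by omega)]
    congr 1
    omega
  rw [s1, s2, s3] at key
  have fin := key.symm.trans (Nat.mul_comm _ _)
  exact_mod_cast fin

private lemma R2 (k : ℕ) (hk : 1 ≤ k) (ρ : ℕ) :
    ∑ t ∈ range (min k (ρ+1)), (-1:ℤ)^t * c ρ t * c (2*k-2-t) (k-1)
      = if ρ ≤ k-1 then c (2*k-2-ρ) (k-1) else (-1:ℤ)^(k-1) * c (ρ-k) (k-1) := by
  by_cases hcase : ρ ≤ k-1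
  · rw [if_pos hcase]
    have hmin : min k (ρ+1) = ρ+1 := by omega
    rw [hmin]
    have := W (k-1) ρ (2*k-2) (by omega) (by omega)
    rw [this]
    have hs := Nat.choose_symm (show k-1 ≤ 2*k-2-ρ by omega)
    rw [show (2*k-2-ρ) - (k-1) = (k-1)-ρ by omega] at hs
    unfold c
    exact_mod_cast hs
  · rw [if_neg hcase]
    have hρk : k ≤ ρ := by omega
    have hmin : min k (ρ+1) = (k-1)+1 := by omega
    rw [hmin]
    rw [← Finset.sum_range_reflect (fun t => (-1:ℤ)^t * c ρ t * c (2*k-2-t) (k-1)) ((k-1)+1)]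
    have congr1 : ∀ u ∈ range ((k-1)+1),
        (-1:ℤ)^((k-1)+1-1-u) * c ρ ((k-1)+1-1-u) * c (2*k-2-((k-1)+1-1-u)) (k-1)
          = (-1:ℤ)^(k-1) * ((-1:ℤ)^u * c ρ ((k-1)-u) * c ((k-1)+u) u) := by
      intro u hu
      simp only [Finset.mem_range] at hu
      have e0 : (k-1)+1-1-u = (k-1)-u := by omega
      rw [e0]
      have e1 : 2*k-2-((k-1)-u) = (k-1)+u := by omega
      rw [e1]
      have e2 : c ((k-1)+u) (k-1) = c ((k-1)+u) u := by
        have hs := Nat.choose_symm (show k-1 ≤ (k-1)+u by omega)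
        rw [show ((k-1)+u) - (k-1) = u from by omega] at hs
        unfold c
        exact_mod_cast hs.symm
      rw [e2, neg_pow_sub (show u ≤ k-1 by omega)]
      ring
    rw [Finset.sum_congr rfl congr1, ← Finset.mul_sum]
    have key := K3 (k-1) (ρ-k) (k-1)
    rw [show (k-1)+(ρ-k)+1 = ρ by omega] at key
    rw [key]

private lemma R1 (k : ℕ) (hk : 1 ≤ k) (m ρ : ℕ) :
    ∑ t ∈ range (min k (ρ+1)), (-1:ℤ)^t * c (m+t) t * c (m+ρ) (ρ-t) * c (2*k-2-t) (k-1)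
      = c (m+ρ) ρ *
        (if ρ ≤ k-1 then c (2*k-2-ρ) (k-1) else (-1:ℤ)^(k-1) * c (ρ-k) (k-1)) := by
  rw [← R2 k hk ρ, Finset.mul_sum]
  apply Finset.sum_congr rfl
  intro t ht
  simp only [Finset.mem_range] at ht
  have htρ : t ≤ ρ := by omega
  have tri := trinom m ρ t htρ
  calc (-1:ℤ)^t * c (m+t) t * c (m+ρ) (ρ-t) * c (2*k-2-t) (k-1)
      = (c (m+t) t * c (m+ρ) (ρ-t)) * ((-1:ℤ)^t * c (2*k-2-t) (k-1)) := by ring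
    _ = (c (m+ρ) ρ * c ρ t) * ((-1:ℤ)^t * c (2*k-2-t) (k-1)) := by rw [← tri]
    _ = c (m+ρ) ρ * ((-1:ℤ)^t * c ρ t * c (2*k-2-t) (k-1)) := by ring

private lemma R0 (k : ℕ) (hk : 1 ≤ k) (m : ℕ) : ∀ r : ℕ,
    ∑ t ∈ range (min k (r+1)), (-1:ℤ)^t * c (m+t) t * c (m+(r+1)) (r-t) * c (2*k-2-t) (k-1)
      = ∑ i ∈ range (min k (r+1)), c (m+i) i * c (2*k-2-i) (k-1)
        + (-1:ℤ)^(k-1) * ∑ i ∈ Finset.Icc (2*k-1) r, c (m+i) i * c (i-k) (k-1) := by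
  intro r
  induction r with
  | zero =>
    have hmin : min k 1 = 1 := by omega
    rw [hmin]
    have hempty : Finset.Icc (2*k-1) 0 = ∅ := by
      apply Finset.Icc_eq_empty
      omega
    rw [hempty]
    simp [c_zero]
  | succ r ih =>
    -- Σ1 via R1
    have hS1 := R1 k hk m (r+1)
    -- split the sum
    have hsplit : ∑ t ∈ range (min k (r+1+1)),
          (-1:ℤ)^t * c (m+t) t * c (m+(r+1+1)) (r+1-t) * c (2*k-2-t) (k-1)
        = (∑ t ∈ range (min k ((r+1)+1)),
            (-1:ℤ)^t * c (m+t) t * c (m+(r+1)) ((r+1)-t) * c (2*k-2-t) (k-1))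
          + ∑ t ∈ range (min k (r+1)),
            (-1:ℤ)^t * c (m+t) t * c (m+(r+1)) (r-t) * c (2*k-2-t) (k-1) := by
      by_cases hkr : k ≤ r+1
      · have e1 : min k (r+1+1) = k := by omega
        have e2 : min k (r+1) = k := by omega
        rw [e1, e2, ← Finset.sum_add_distrib]
        apply Finset.sum_congr rfl
        intro t ht
        simp only [Finset.mem_range] at ht
        have ep : m+(r+1+1) = (m+(r+1))+1 := by omega
        have ep2 : r+1-t = (r-t)+1 := by omega
        rw [ep, ep2, c_pascal, ← ep2]
        ring
      · have e1 : min k (r+1+1) = r+2 := by omega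
        have e2 : min k (r+1) = r+1 := by omega
        rw [e1, e2]
        rw [Finset.sum_range_succ
          (fun t => (-1:ℤ)^t * c (m+t) t * c (m+(r+1+1)) (r+1-t) * c (2*k-2-t) (k-1)) (r+1)]
        rw [Finset.sum_range_succ
          (fun t => (-1:ℤ)^t * c (m+t) t * c (m+(r+1)) ((r+1)-t) * c (2*k-2-t) (k-1)) (r+1)]
        have elast : (-1:ℤ)^(r+1) * c (m+(r+1)) (r+1) * c (m+(r+1+1)) (r+1-(r+1)) * c (2*k-2-(r+1)) (k-1)
            = (-1:ℤ)^(r+1) * c (m+(r+1)) (r+1) * c (m+(r+1)) ((r+1)-(r+1)) * c (2*k-2-(r+1)) (k-1) := by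
          rw [show r+1-(r+1) = 0 from by omega, c_zero, c_zero]
        rw [elast]
        have emain : ∑ t ∈ range (r+1),
              (-1:ℤ)^t * c (m+t) t * c (m+(r+1+1)) (r+1-t) * c (2*k-2-t) (k-1)
            = (∑ t ∈ range (r+1),
                (-1:ℤ)^t * c (m+t) t * c (m+(r+1)) ((r+1)-t) * c (2*k-2-t) (k-1))
              + ∑ t ∈ range (r+1),
                (-1:ℤ)^t * c (m+t) t * c (m+(r+1)) (r-t) * c (2*k-2-t) (k-1) := by
          rw [← Finset.sum_add_distrib]
          apply Finset.sum_congr rfl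
          intro t ht
          simp only [Finset.mem_range] at ht
          have ep : m+(r+1+1) = (m+(r+1))+1 := by omega
          have ep2 : r+1-t = (r-t)+1 := by omega
          rw [ep, ep2, c_pascal, ← ep2]
          ring
        rw [emain]
        ring
    rw [hsplit, ih]
    rw [show m+(r+1) = m+r+1 from by omega] at hS1 ⊢
    rw [hS1]
    -- now handle RHS increments
    by_cases h1 : r+1 ≤ k-1
    · rw [if_pos h1]
      have e1 : min k ((r+1)+1) = (r+1)+1 := by omega
      have e2 : min k (r+1) = r+1 := by omega
      rw [e1, e2]
      rw [Finset.sum_range_succ (fun i => c (m+i) i * c (2*k-2-i) (k-1)) (r+1)]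
      have eIcc : Finset.Icc (2*k-1) (r+1) = Finset.Icc (2*k-1) r := by
        rw [Finset.Icc_eq_empty (by omega), Finset.Icc_eq_empty (by omega)]
      rw [eIcc, show m+(r+1) = m+r+1 from by omega]
      ring
    · rw [if_neg h1]
      have e1 : min k ((r+1)+1) = k := by omega
      have e2 : min k (r+1) = k := by omega
      rw [e1, e2]
      by_cases h2 : 2*k-1 ≤ r+1
      · have eIcc : Finset.Icc (2*k-1) (r+1) = insert (r+1) (Finset.Icc (2*k-1) r) := by
          rw [← Finset.insert_Icc_right_eq_Icc_add_one (by omega : 2*k-1 ≤ r+1)]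
        rw [eIcc, Finset.sum_insert (by simp)]
        rw [show m+(r+1) = m+r+1 from by omega]
        ring
      · have eIcc : Finset.Icc (2*k-1) (r+1) = Finset.Icc (2*k-1) r := by
          rw [Finset.Icc_eq_empty (by omega), Finset.Icc_eq_empty (by omega)]
        rw [eIcc]
        have ez : c (r+1-k) (k-1) = 0 := c_eq_zero (by omega)
        rw [ez]
        ring

private lemma c_self (a : ℕ) : c a a = 1 := by simp [c]

private lemma Bmain (k : ℕ) (hk : 1 ≤ k) (m : ℕ) : ∀ r s : ℕ, r < s →
    ∑ t ∈ range (min k (r+1)), (-1:ℤ)^t * c (m+t) t * c (m+s) (r-t) * c (2*k-2-t) (k-1)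
      = ∑ i ∈ range (min k (r+1)), c (m+i) i * c (s-1-i) (r-i) * c (2*k-2-i) (k-1)
        + (-1:ℤ)^(k-1) * ∑ i ∈ Finset.Icc (2*k-1) r, c (m+i) i * c (s-1-i) (r-i) * c (i-k) (k-1) := by
  intro r
  induction r with
  | zero =>
    intro s hs
    have hmin : min k 1 = 1 := by omega
    rw [hmin]
    have hempty : Finset.Icc (2*k-1) 0 = ∅ := Finset.Icc_eq_empty (by omega)
    rw [hempty]
    simp [c_zero]
  | succ r' ihr =>
    intro s hs
    have hs' : r'+2 ≤ s := hs
    clear hs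
    induction s, hs' using Nat.le_induction with
    | base =>
      -- s = r'+2, i.e. s = (r'+1)+1 : use R0
      have base := R0 k hk m (r'+1)
      rw [show m+(r'+1+1) = m+(r'+2) from by omega] at base
      rw [base]
      congr 1
      · apply Finset.sum_congr rfl
        intro i hi
        simp only [Finset.mem_range] at hi
        rw [show r'+2-1-i = (r'+1)-i from by omega, c_self]
        ring
      · congr 1
        apply Finset.sum_congr rfl
        intro i hi
        simp only [Finset.mem_Icc] at hi
        rw [show r'+2-1-i = (r'+1)-i from by omega, c_self]
        ring
    | succ s hs ihs =>
      -- split LHS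
      have hsplitL : ∑ t ∈ range (min k (r'+1+1)),
            (-1:ℤ)^t * c (m+t) t * c (m+(s+1)) (r'+1-t) * c (2*k-2-t) (k-1)
          = (∑ t ∈ range (min k (r'+1+1)),
              (-1:ℤ)^t * c (m+t) t * c (m+s) ((r'+1)-t) * c (2*k-2-t) (k-1))
            + ∑ t ∈ range (min k (r'+1)),
              (-1:ℤ)^t * c (m+t) t * c (m+s) (r'-t) * c (2*k-2-t) (k-1) := by
        by_cases hkr : k ≤ r'+1
        · have e1 : min k (r'+1+1) = k := by omega
          have e2 : min k (r'+1) = k := by omega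
          rw [e1, e2, ← Finset.sum_add_distrib]
          apply Finset.sum_congr rfl
          intro t ht
          simp only [Finset.mem_range] at ht
          have ep : m+(s+1) = (m+s)+1 := by omega
          have ep2 : r'+1-t = (r'-t)+1 := by omega
          rw [ep, ep2, c_pascal, ← ep2]
          ring
        · have e1 : min k (r'+1+1) = r'+2 := by omega
          have e2 : min k (r'+1) = r'+1 := by omega
          rw [e1, e2]
          rw [Finset.sum_range_succ
            (fun t => (-1:ℤ)^t * c (m+t) t * c (m+(s+1)) (r'+1-t) * c (2*k-2-t) (k-1)) (r'+1)]
          rw [Finset.sum_range_succ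
            (fun t => (-1:ℤ)^t * c (m+t) t * c (m+s) ((r'+1)-t) * c (2*k-2-t) (k-1)) (r'+1)]
          have elast : (-1:ℤ)^(r'+1) * c (m+(r'+1)) (r'+1) * c (m+(s+1)) (r'+1-(r'+1)) * c (2*k-2-(r'+1)) (k-1)
              = (-1:ℤ)^(r'+1) * c (m+(r'+1)) (r'+1) * c (m+s) ((r'+1)-(r'+1)) * c (2*k-2-(r'+1)) (k-1) := by
            rw [show r'+1-(r'+1) = 0 from by omega, c_zero, c_zero]
          rw [elast]
          have emain : ∑ t ∈ range (r'+1),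
                (-1:ℤ)^t * c (m+t) t * c (m+(s+1)) (r'+1-t) * c (2*k-2-t) (k-1)
              = (∑ t ∈ range (r'+1),
                  (-1:ℤ)^t * c (m+t) t * c (m+s) ((r'+1)-t) * c (2*k-2-t) (k-1))
                + ∑ t ∈ range (r'+1),
                  (-1:ℤ)^t * c (m+t) t * c (m+s) (r'-t) * c (2*k-2-t) (k-1) := by
            rw [← Finset.sum_add_distrib]
            apply Finset.sum_congr rfl
            intro t ht
            simp only [Finset.mem_range] at ht
            have ep : m+(s+1) = (m+s)+1 := by omega
            have ep2 : r'+1-t = (r'-t)+1 := by omega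
            rw [ep, ep2, c_pascal, ← ep2]
            ring
          rw [emain]
          ring
      rw [hsplitL, ihs, ihr s (by omega)]
      -- now split RHS pieces and recombine
      have hsplitR1 : ∑ i ∈ range (min k (r'+1+1)),
            c (m+i) i * c ((s+1)-1-i) ((r'+1)-i) * c (2*k-2-i) (k-1)
          = (∑ i ∈ range (min k (r'+1+1)),
              c (m+i) i * c (s-1-i) ((r'+1)-i) * c (2*k-2-i) (k-1))
            + ∑ i ∈ range (min k (r'+1)),
              c (m+i) i * c (s-1-i) (r'-i) * c (2*k-2-i) (k-1) := by
        by_cases hkr : k ≤ r'+1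
        · have e1 : min k (r'+1+1) = k := by omega
          have e2 : min k (r'+1) = k := by omega
          rw [e1, e2, ← Finset.sum_add_distrib]
          apply Finset.sum_congr rfl
          intro i hi
          simp only [Finset.mem_range] at hi
          have ep : (s+1)-1-i = (s-1-i)+1 := by omega
          have ep2 : r'+1-i = (r'-i)+1 := by omega
          rw [ep, ep2, c_pascal, ← ep2]
          ring
        · have e1 : min k (r'+1+1) = r'+2 := by omega
          have e2 : min k (r'+1) = r'+1 := by omega
          rw [e1, e2]
          rw [Finset.sum_range_succ
            (fun i => c (m+i) i * c ((s+1)-1-i) ((r'+1)-i) * c (2*k-2-i) (k-1)) (r'+1)]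
          rw [Finset.sum_range_succ
            (fun i => c (m+i) i * c (s-1-i) ((r'+1)-i) * c (2*k-2-i) (k-1)) (r'+1)]
          have elast : c (m+(r'+1)) (r'+1) * c ((s+1)-1-(r'+1)) ((r'+1)-(r'+1)) * c (2*k-2-(r'+1)) (k-1)
              = c (m+(r'+1)) (r'+1) * c (s-1-(r'+1)) ((r'+1)-(r'+1)) * c (2*k-2-(r'+1)) (k-1) := by
            rw [show r'+1-(r'+1) = 0 from by omega, c_zero, c_zero]
          rw [elast]
          have emain : ∑ i ∈ range (r'+1),
                c (m+i) i * c ((s+1)-1-i) ((r'+1)-i) * c (2*k-2-i) (k-1)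
              = (∑ i ∈ range (r'+1),
                  c (m+i) i * c (s-1-i) ((r'+1)-i) * c (2*k-2-i) (k-1))
                + ∑ i ∈ range (r'+1),
                  c (m+i) i * c (s-1-i) (r'-i) * c (2*k-2-i) (k-1) := by
            rw [← Finset.sum_add_distrib]
            apply Finset.sum_congr rfl
            intro i hi
            simp only [Finset.mem_range] at hi
            have ep : (s+1)-1-i = (s-1-i)+1 := by omega
            have ep2 : r'+1-i = (r'-i)+1 := by omega
            rw [ep, ep2, c_pascal, ← ep2]
            ring
          rw [emain]
          ring
      have hsplitR2 : ∑ i ∈ Finset.Icc (2*k-1) (r'+1),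
            c (m+i) i * c ((s+1)-1-i) ((r'+1)-i) * c (i-k) (k-1)
          = (∑ i ∈ Finset.Icc (2*k-1) (r'+1),
              c (m+i) i * c (s-1-i) ((r'+1)-i) * c (i-k) (k-1))
            + ∑ i ∈ Finset.Icc (2*k-1) r',
              c (m+i) i * c (s-1-i) (r'-i) * c (i-k) (k-1) := by
        by_cases h2 : 2*k-1 ≤ r'+1
        · have eIcc : Finset.Icc (2*k-1) (r'+1) = insert (r'+1) (Finset.Icc (2*k-1) r') := by
            rw [← Finset.insert_Icc_right_eq_Icc_add_one (by omega : 2*k-1 ≤ r'+1)]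
          rw [eIcc, Finset.sum_insert (by simp), Finset.sum_insert (by simp)]
          have elast : c (m+(r'+1)) (r'+1) * c ((s+1)-1-(r'+1)) ((r'+1)-(r'+1)) * c ((r'+1)-k) (k-1)
              = c (m+(r'+1)) (r'+1) * c (s-1-(r'+1)) ((r'+1)-(r'+1)) * c ((r'+1)-k) (k-1) := by
            rw [show r'+1-(r'+1) = 0 from by omega, c_zero, c_zero]
          rw [elast]
          have emain : ∑ i ∈ Finset.Icc (2*k-1) r',
                c (m+i) i * c ((s+1)-1-i) ((r'+1)-i) * c (i-k) (k-1)
              = (∑ i ∈ Finset.Icc (2*k-1) r',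
                  c (m+i) i * c (s-1-i) ((r'+1)-i) * c (i-k) (k-1))
                + ∑ i ∈ Finset.Icc (2*k-1) r',
                  c (m+i) i * c (s-1-i) (r'-i) * c (i-k) (k-1) := by
            rw [← Finset.sum_add_distrib]
            apply Finset.sum_congr rfl
            intro i hi
            simp only [Finset.mem_Icc] at hi
            have ep : (s+1)-1-i = (s-1-i)+1 := by omega
            have ep2 : r'+1-i = (r'-i)+1 := by omega
            rw [ep, ep2, c_pascal, ← ep2]
            ring
          rw [emain]
          ring
        · have e1 : Finset.Icc (2*k-1) (r'+1) = ∅ := Finset.Icc_eq_empty (by omega)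
          have e2 : Finset.Icc (2*k-1) r' = ∅ := Finset.Icc_eq_empty (by omega)
          rw [e1, e2]
          simp
      rw [hsplitR1, hsplitR2]
      ring

private lemma vander (a b K : ℕ) : c (a+b) K = ∑ t ∈ range (K+1), c a t * c b (K-t) := by
  unfold c
  have := Nat.add_choose_eq a b K
  rw [Finset.Nat.sum_antidiagonal_eq_sum_range_succ_mk] at this
  rw [this]
  push_cast
  rfl

private lemma innerK (m k t : ℕ) (hk : 1 ≤ k) (ht : t < k) :
    ∑ j ∈ range k, (-1:ℤ)^j * c (m+2*k-1) (k-j-1) * c (m+j) j * c j t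
      = (-1:ℤ)^t * c (m+t) t * c (2*k-2-t) (k-1) := by
  have hsub : ∑ j ∈ range k, (-1:ℤ)^j * c (m+2*k-1) (k-j-1) * c (m+j) j * c j t
      = ∑ j ∈ Finset.Ico t k, (-1:ℤ)^j * c (m+2*k-1) (k-j-1) * c (m+j) j * c j t := by
    rw [Finset.range_eq_Ico]
    apply (Finset.sum_subset (Finset.Ico_subset_Ico (by omega) le_rfl) _).symm
    intro j hj hnot
    simp only [Finset.mem_Ico] at hj hnot
    have : j < t := by omega
    rw [c_eq_zero (a := j) this]
    ring
  rw [hsub, Finset.sum_Ico_eq_sum_range]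
  have congr1 : ∀ u ∈ range (k-t),
      (-1:ℤ)^(t+u) * c (m+2*k-1) (k-(t+u)-1) * c (m+(t+u)) (t+u) * c (t+u) t
        = ((-1:ℤ)^t * c (m+t) t) *
            ((-1:ℤ)^u * c ((m+t)+(2*k-2-t)+1) ((k-1-t)-u) * c ((m+t)+u) u) := by
    intro u hu
    simp only [Finset.mem_range] at hu
    have tri := trinom m (t+u) t (by omega)
    have e1 : (t+u)-t = u := by omega
    rw [e1] at tri
    have e2 : (m+t)+(2*k-2-t)+1 = m+2*k-1 := by omega
    have e3 : (k-1-t)-u = k-(t+u)-1 := by omega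
    have e4 : (m+t)+u = m+(t+u) := by omega
    rw [e2, e3, e4]
    calc (-1:ℤ)^(t+u) * c (m+2*k-1) (k-(t+u)-1) * c (m+(t+u)) (t+u) * c (t+u) t
        = (-1:ℤ)^(t+u) * c (m+2*k-1) (k-(t+u)-1) * (c (m+(t+u)) (t+u) * c (t+u) t) := by ring
      _ = (-1:ℤ)^(t+u) * c (m+2*k-1) (k-(t+u)-1) * (c (m+t) t * c (m+(t+u)) u) := by rw [tri]
      _ = ((-1:ℤ)^t * c (m+t) t) * ((-1:ℤ)^u * c (m+2*k-1) (k-(t+u)-1) * c (m+(t+u)) u) := by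
          rw [pow_add]; ring
  rw [Finset.sum_congr rfl congr1, ← Finset.mul_sum]
  have hrange : k - t = (k-1-t)+1 := by omega
  rw [hrange, K3 (m+t) (2*k-2-t) (k-1-t)]
  have hsymm : c (2*k-2-t) (k-1-t) = c (2*k-2-t) (k-1) := by
    have hs := Nat.choose_symm (show k-1 ≤ 2*k-2-t by omega)
    rw [show (2*k-2-t)-(k-1) = k-1-t from by omega] at hs
    unfold c
    exact_mod_cast hs
  rw [hsymm]

/-- Non-alternating form of the sum `D_{k,l}` (case `s ≥ 2l`):
`∑_{j=0}^{k−1} (−1)^{k+j+1} C(n+2k−s−1,k−j−1) C(n−s+j,n−s) C(n+j,2l−1)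
  = (−1)^{k+1} ∑_{i=0}^{min(k−1,2l−1)} C(n−s+i,i) C(s−1−i,2l−1−i) C(2k−i−2,k−1)
    + ∑_{i=2k−1}^{2l−1} C(n−s+i,i) C(s−1−i,2l−1−i) C(i−k,k−1)`. -/
theorem Dkl_nonalternating_case1 (k l s n : ℕ)
    (hk1 : 1 ≤ k) (hks : k ≤ s) (hl1 : 1 ≤ l) (hls : l ≤ s)
    (hsn : s ≤ n) (hs2l : 2 * l ≤ s) :
    ∑ j ∈ Finset.range k,
      (-1 : ℤ) ^ (k + j + 1) * (Nat.choose (n + 2 * k - s - 1) (k - j - 1) : ℤ) *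
        (Nat.choose (n - s + j) (n - s) : ℤ) * (Nat.choose (n + j) (2 * l - 1) : ℤ)
      = (-1 : ℤ) ^ (k + 1) *
          ∑ i ∈ Finset.range (min (k - 1) (2 * l - 1) + 1),
            (Nat.choose (n - s + i) i : ℤ) * (Nat.choose (s - 1 - i) (2 * l - 1 - i) : ℤ) *
              (Nat.choose (2 * k - i - 2) (k - 1) : ℤ)
        + ∑ i ∈ Finset.Icc (2 * k - 1) (2 * l - 1),
            (Nat.choose (n - s + i) i : ℤ) * (Nat.choose (s - 1 - i) (2 * l - 1 - i) : ℤ) *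
              (Nat.choose (i - k) (k - 1) : ℤ) := by
  show (∑ j ∈ Finset.range k,
      (-1 : ℤ) ^ (k + j + 1) * c (n + 2 * k - s - 1) (k - j - 1) *
        c (n - s + j) (n - s) * c (n + j) (2 * l - 1))
    = (-1 : ℤ) ^ (k + 1) *
        ∑ i ∈ Finset.range (min (k - 1) (2 * l - 1) + 1),
          c (n - s + i) i * c (s - 1 - i) (2 * l - 1 - i) * c (2 * k - i - 2) (k - 1)
      + ∑ i ∈ Finset.Icc (2 * k - 1) (2 * l - 1),
          c (n - s + i) i * c (s - 1 - i) (2 * l - 1 - i) * c (i - k) (k - 1)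
  have hm : n - s + s = n := by omega
  set m := n - s with hmdef
  have hn : n = m + s := by omega
  -- Step 1 : normalize the left side
  have h1 : ∑ j ∈ Finset.range k,
      (-1 : ℤ) ^ (k + j + 1) * c (n + 2 * k - s - 1) (k - j - 1) *
        c (m + j) m * c (n + j) (2 * l - 1)
      = (-1:ℤ)^(k+1) * ∑ j ∈ range k, ∑ t ∈ range (2*l),
          (-1:ℤ)^j * c (m+2*k-1) (k-j-1) * c (m+j) j * (c j t * c n (2*l-1-t)) := by
    rw [Finset.mul_sum]
    apply Finset.sum_congr rfl
    intro j hj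
    simp only [Finset.mem_range] at hj
    have e1 : n + 2*k - s - 1 = m + 2*k - 1 := by omega
    have e2 : c (m+j) m = c (m+j) j := by
      have hs2 := Nat.choose_symm (show j ≤ m+j by omega)
      rw [show (m+j)-j = m from by omega] at hs2
      unfold c
      exact_mod_cast hs2
    have e3 : c (n+j) (2*l-1) = ∑ t ∈ range (2*l), c j t * c n (2*l-1-t) := by
      rw [show n+j = j+n from by omega, vander j n (2*l-1),
        show 2*l-1+1 = 2*l from by omega]
    have e4 : (-1:ℤ)^(k+j+1) = (-1:ℤ)^(k+1) * (-1:ℤ)^j := by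
      rw [← pow_add]
      congr 1
      omega
    rw [e1, e2, e3, e4, Finset.mul_sum, Finset.mul_sum]
    apply Finset.sum_congr rfl
    intro t _
    ring
  rw [h1, Finset.sum_comm]
  -- Step 2 : evaluate the inner sums
  have h2 : ∑ t ∈ range (2*l), ∑ j ∈ range k,
        (-1:ℤ)^j * c (m+2*k-1) (k-j-1) * c (m+j) j * (c j t * c n (2*l-1-t))
      = ∑ t ∈ range (min k (2*l)),
          (-1:ℤ)^t * c (m+t) t * c (m+s) (2*l-1-t) * c (2*k-2-t) (k-1) := by
    have inner_eval : ∀ t ∈ range (2*l), ∑ j ∈ range k,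
          (-1:ℤ)^j * c (m+2*k-1) (k-j-1) * c (m+j) j * (c j t * c n (2*l-1-t))
        = if t < k then (-1:ℤ)^t * c (m+t) t * c (m+s) (2*l-1-t) * c (2*k-2-t) (k-1)
          else 0 := by
      intro t _
      by_cases htk : t < k
      · rw [if_pos htk]
        have factored : ∑ j ∈ range k,
            (-1:ℤ)^j * c (m+2*k-1) (k-j-1) * c (m+j) j * (c j t * c n (2*l-1-t))
            = (∑ j ∈ range k,
                (-1:ℤ)^j * c (m+2*k-1) (k-j-1) * c (m+j) j * c j t) * c n (2*l-1-t) := by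
          rw [Finset.sum_mul]
          apply Finset.sum_congr rfl
          intro j _
          ring
        rw [factored, innerK m k t hk1 htk, ← hn]
        ring
      · rw [if_neg htk]
        apply Finset.sum_eq_zero
        intro j hj
        simp only [Finset.mem_range] at hj
        rw [c_eq_zero (a := j) (b := t) (by omega)]
        ring
    rw [Finset.sum_congr rfl inner_eval]
    have shrink : ∑ t ∈ range (2*l),
          (if t < k then (-1:ℤ)^t * c (m+t) t * c (m+s) (2*l-1-t) * c (2*k-2-t) (k-1) else 0)
        = ∑ t ∈ range (min k (2*l)),
          (if t < k then (-1:ℤ)^t * c (m+t) t * c (m+s) (2*l-1-t) * c (2*k-2-t) (k-1) else 0) := by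
      apply (Finset.sum_subset (by
        intro t ht
        simp only [Finset.mem_range] at *
        omega) _).symm
      intro t ht hnot
      simp only [Finset.mem_range] at ht hnot
      rw [if_neg (by omega)]
    rw [shrink]
    apply Finset.sum_congr rfl
    intro t ht
    simp only [Finset.mem_range] at ht
    rw [if_pos (by omega)]
  rw [h2]
  -- Step 3 : apply the main combinatorial identity
  have h3 := Bmain k hk1 m (2*l-1) s (by omega)
  rw [show 2*l-1+1 = 2*l from by omega] at h3
  rw [h3]
  -- Step 4 : final sign bookkeeping
  have emin : min (k-1) (2*l-1) + 1 = min k (2*l) := by omega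
  rw [emin]
  have esign : (-1:ℤ)^(k+1) * (-1:ℤ)^(k-1) = 1 := by
    rw [← pow_add]
    apply Even.neg_one_pow
    exact ⟨k, by omega⟩
  have congr2 : ∀ i ∈ range (min k (2*l)),
      c (m+i) i * c (s-1-i) (2*l-1-i) * c (2*k-2-i) (k-1)
        = c (m+i) i * c (s-1-i) (2*l-1-i) * c (2*k-i-2) (k-1) := by
    intro i _
    rw [show 2*k-2-i = 2*k-i-2 from by omega]
  rw [Finset.sum_congr rfl congr2]
  rw [mul_add, ← mul_assoc, esign]
  ring
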